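/- (Variance decomposition) Let d ≥ 1, let μ_j (j ∈ Fin d) be probability measures on ℝ, let μ := ⊗_j μ_j be their product measure on (Fin d → ℝ), and let f : (Fin d → ℝ) → ℝ be bounded and measurable. For u ⊆ Fin d define F_u(x) := ∫ f(x_u : z_{−u}) dμ(z), f_u := Σ_{v ⊆ u} (−1)^{|u|−|v|} F_v, σ² := ∫ (f(x) − ∫ f dμ)² dμ(x), and σ²_u := ∫ f_u(x)² dμ(x) for u ≠ ∅. Then σ² = Σ_{u ⊆ Fin d, u ≠ ∅} σ²_u. -/

import Mathlib

open MeasureTheory Finset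

/-- Partial dependence function: `F_u(x) = ∫ f(x_u : z_{-u}) dμ(z)`, where the hybrid
point `(x_u : z_{-u})` takes coordinate `x j` for `j ∈ u` and `z j` otherwise. -/
noncomputable def partialDep {d : ℕ} (μ : Fin d → Measure ℝ)
    (f : (Fin d → ℝ) → ℝ) (u : Finset (Fin d)) (x : Fin d → ℝ) : ℝ :=
  ∫ z, f (fun j => if j ∈ u then x j else z j) ∂(Measure.pi μ)

/-- PDD component: `f_u = Σ_{v ⊆ u} (-1)^(|u|-|v|) F_v`. -/
noncomputable def pddComp {d : ℕ} (μ : Fin d → Measure ℝ)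
    (f : (Fin d → ℝ) → ℝ) (u : Finset (Fin d)) (x : Fin d → ℝ) : ℝ :=
  ∑ v ∈ u.powerset, (-1 : ℝ) ^ (u.card - v.card) * partialDep μ f v x


section aux
variable {d : ℕ} {μ : Fin d → Measure ℝ} [∀ i, IsProbabilityMeasure (μ i)]
variable {f : (Fin d → ℝ) → ℝ} {C : ℝ}

lemma integrable_of_bdd {α : Type*} [MeasurableSpace α] {ν : Measure α} [IsProbabilityMeasure ν]
    {g : α → ℝ} (hg : AEStronglyMeasurable g ν) {B : ℝ} (hB : ∀ x, |g x| ≤ B) :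
    Integrable g ν :=
  Integrable.mono' (integrable_const B) hg (ae_of_all _ fun x => by simpa using hB x)

lemma measurable_hyb (u : Finset (Fin d)) :
    Measurable (fun p : (Fin d → ℝ) × (Fin d → ℝ) => fun j => if j ∈ u then p.1 j else p.2 j) := by
  apply measurable_pi_lambda
  intro j
  by_cases h : j ∈ u <;> simp only [h, if_true, if_false]
  · exact (measurable_pi_apply j).comp measurable_fst
  · exact (measurable_pi_apply j).comp measurable_snd

lemma measurable_partialDep (hf : Measurable f) (u : Finset (Fin d)) :
    Measurable (partialDep μ f u) := by
  have h : StronglyMeasurable fun p : (Fin d → ℝ) × (Fin d → ℝ) =>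
      f (fun j => if j ∈ u then p.1 j else p.2 j) :=
    (hf.comp (measurable_hyb u)).stronglyMeasurable
  exact h.integral_prod_right'.measurable

lemma abs_partialDep_le (hC : ∀ x, |f x| ≤ C) (u : Finset (Fin d)) (x : Fin d → ℝ) :
    |partialDep μ f u x| ≤ C := by
  have := norm_integral_le_of_norm_le_const (μ := Measure.pi μ)
    (f := fun z => f (fun j => if j ∈ u then x j else z j)) (C := C)
    (ae_of_all _ fun z => by simpa using hC _)
  simpa [partialDep] using this

lemma partialDep_congr (u : Finset (Fin d)) {x y : Fin d → ℝ} (h : ∀ j ∈ u, x j = y j) :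
    partialDep μ f u x = partialDep μ f u y := by
  unfold partialDep
  congr 1
  funext z
  congr 1
  funext j
  by_cases hj : j ∈ u <;> simp [hj, h j]

end aux

set_option linter.unusedSectionVars false

section mp
variable {d : ℕ} {μ : Fin d → Measure ℝ} [∀ i, IsProbabilityMeasure (μ i)]

end mp

section abstract
variable {α β γ : Type*} [MeasurableSpace α] [MeasurableSpace β] [MeasurableSpace γ]
  {ν : Measure γ} {ρ1 : Measure α} {ρ2 : Measure β}
  [IsProbabilityMeasure ν] [IsProbabilityMeasure ρ1] [IsProbabilityMeasure ρ2]

lemma recomb_abs (e : γ ≃ᵐ α × β) (hmp : MeasurePreserving e ν (ρ1.prod ρ2))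
    {g : γ → ℝ} (hg : Measurable g) {B : ℝ} (hB : ∀ x, |g x| ≤ B) :
    ∫ x, ∫ z, g (e.symm ((e x).1, (e z).2)) ∂ν ∂ν = ∫ y, g y ∂ν := by
  set G : α × β → ℝ := fun pq => g (e.symm pq) with hG
  have hGm : Measurable G := hg.comp e.symm.measurable
  have hGb : ∀ pq, |G pq| ≤ B := fun pq => hB _
  have hsnd : Measure.map Prod.snd (ρ1.prod ρ2) = ρ2 := by
    rw [Measure.map_snd_prod]; simp
  have hfst : Measure.map Prod.fst (ρ1.prod ρ2) = ρ1 := by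
    rw [Measure.map_fst_prod]; simp
  have inner : ∀ x : γ,
      ∫ z, G ((e x).1, (e z).2) ∂ν = ∫ q, G ((e x).1, q) ∂ρ2 := by
    intro x
    have h2 := integral_map (μ := ρ1.prod ρ2) measurable_snd.aemeasurable
      (f := fun q => G ((e x).1, q))
      ((hGm.comp (measurable_const.prodMk measurable_id)).aestronglyMeasurable)
    rw [hmp.integral_comp e.measurableEmbedding (fun pq => G ((e x).1, pq.2)), ← h2, hsnd]
  have hH : StronglyMeasurable fun p => ∫ q, G (p, q) ∂ρ2 :=
    hGm.stronglyMeasurable.integral_prod_right'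
  have outer : ∫ x, ∫ q, G ((e x).1, q) ∂ρ2 ∂ν = ∫ p, ∫ q, G (p, q) ∂ρ2 ∂ρ1 := by
    have h2 := integral_map (μ := ρ1.prod ρ2) measurable_fst.aemeasurable
      (f := fun p => ∫ q, G (p, q) ∂ρ2) hH.aestronglyMeasurable
    rw [hmp.integral_comp e.measurableEmbedding (fun pq => ∫ q, G (pq.1, q) ∂ρ2), ← h2, hfst]
  calc ∫ x, ∫ z, g (e.symm ((e x).1, (e z).2)) ∂ν ∂ν
      = ∫ x, ∫ q, G ((e x).1, q) ∂ρ2 ∂ν := by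
        congr 1; funext x; exact inner x
    _ = ∫ p, ∫ q, G (p, q) ∂ρ2 ∂ρ1 := outer
    _ = ∫ pq, G pq ∂(ρ1.prod ρ2) := by
        have hint : Integrable G (ρ1.prod ρ2) := integrable_of_bdd hGm.aestronglyMeasurable hGb
        have hii := integral_integral (f := fun p q => G (p, q)) (μ := ρ1) (ν := ρ2) (by
          exact hint)
        rw [hii]
    _ = ∫ y, g y ∂ν := MeasurePreserving.symm e hmp |>.integral_comp e.symm.measurableEmbedding g

lemma factor_abs (e : γ ≃ᵐ α × β) (hmp : MeasurePreserving e ν (ρ1.prod ρ2))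
    {g1 g2 : γ → ℝ} (hm1 : Measurable g1) (hm2 : Measurable g2)
    (h1 : ∀ p q q', g1 (e.symm (p, q)) = g1 (e.symm (p, q')))
    (h2 : ∀ p p' q, g2 (e.symm (p, q)) = g2 (e.symm (p', q))) :
    ∫ y, g1 y * g2 y ∂ν = (∫ y, g1 y ∂ν) * ∫ y, g2 y ∂ν := by
  haveI : Nonempty α := by
    rcases isEmpty_or_nonempty α with h | h
    · exfalso
      have h1' : (ρ1 : Measure α) Set.univ = 1 := measure_univ
      rw [Set.univ_eq_empty_iff.2 h] at h1'
      simp at h1'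
    · exact h
  haveI : Nonempty β := by
    rcases isEmpty_or_nonempty β with h | h
    · exfalso
      have h1' : (ρ2 : Measure β) Set.univ = 1 := measure_univ
      rw [Set.univ_eq_empty_iff.2 h] at h1'
      simp at h1'
    · exact h
  set p0 : α := Classical.arbitrary α
  set q0 : β := Classical.arbitrary β
  set G1 : α → ℝ := fun p => g1 (e.symm (p, q0)) with hG1
  set G2 : β → ℝ := fun q => g2 (e.symm (p0, q)) with hG2
  have hG1m : Measurable G1 :=
    hm1.comp (e.symm.measurable.comp (measurable_id.prodMk measurable_const))
  have hG2m : Measurable G2 :=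
    hm2.comp (e.symm.measurable.comp (measurable_const.prodMk measurable_id))
  have key1 : ∀ pq : α × β, g1 (e.symm pq) = G1 pq.1 := by
    intro pq
    have := h1 pq.1 pq.2 q0
    simpa using this
  have key2 : ∀ pq : α × β, g2 (e.symm pq) = G2 pq.2 := by
    intro pq
    have := h2 pq.1 p0 pq.2
    simpa using this
  have hfst : Measure.map Prod.fst (ρ1.prod ρ2) = ρ1 := by
    rw [Measure.map_fst_prod]; simp
  have hsnd : Measure.map Prod.snd (ρ1.prod ρ2) = ρ2 := by
    rw [Measure.map_snd_prod]; simp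
  have e1 : ∫ y, g1 y ∂ν = ∫ p, G1 p ∂ρ1 := by
    have := hmp.integral_comp e.measurableEmbedding (fun pq => G1 pq.1)
    have hmap := integral_map (μ := ρ1.prod ρ2) measurable_fst.aemeasurable
      (f := G1) hG1m.aestronglyMeasurable
    calc ∫ y, g1 y ∂ν = ∫ y, G1 ((e y).1) ∂ν := by
          congr 1; funext y
          conv_lhs => rw [show y = e.symm (e y) by simp]
          rw [show (e y) = ((e y).1, (e y).2) from rfl]
          exact key1 _
      _ = ∫ pq, G1 pq.1 ∂(ρ1.prod ρ2) := this
      _ = ∫ p, G1 p ∂ρ1 := by (conv_rhs => rw [← hfst]); exact hmap.symm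
  have e2 : ∫ y, g2 y ∂ν = ∫ q, G2 q ∂ρ2 := by
    have := hmp.integral_comp e.measurableEmbedding (fun pq => G2 pq.2)
    have hmap := integral_map (μ := ρ1.prod ρ2) measurable_snd.aemeasurable
      (f := G2) hG2m.aestronglyMeasurable
    calc ∫ y, g2 y ∂ν = ∫ y, G2 ((e y).2) ∂ν := by
          congr 1; funext y
          conv_lhs => rw [show y = e.symm (e y) by simp]
          rw [show (e y) = ((e y).1, (e y).2) from rfl]
          exact key2 _
      _ = ∫ pq, G2 pq.2 ∂(ρ1.prod ρ2) := this
      _ = ∫ q, G2 q ∂ρ2 := by (conv_rhs => rw [← hsnd]); exact hmap.symm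
  calc ∫ y, g1 y * g2 y ∂ν = ∫ y, G1 ((e y).1) * G2 ((e y).2) ∂ν := by
        congr 1; funext y
        conv_lhs => rw [show y = e.symm (e y) by simp]
        rw [show (e y) = ((e y).1, (e y).2) from rfl, key1 _, key2 _]
    _ = ∫ pq, G1 pq.1 * G2 pq.2 ∂(ρ1.prod ρ2) :=
        hmp.integral_comp e.measurableEmbedding (fun pq => G1 pq.1 * G2 pq.2)
    _ = (∫ p, G1 p ∂ρ1) * ∫ q, G2 q ∂ρ2 := integral_prod_mul G1 G2
    _ = (∫ y, g1 y ∂ν) * ∫ y, g2 y ∂ν := by rw [e1, e2]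

end abstract

section concrete
variable {d : ℕ} {μ : Fin d → Measure ℝ} [∀ i, IsProbabilityMeasure (μ i)]
variable {f : (Fin d → ℝ) → ℝ} {C : ℝ}

noncomputable def eqv (u : Finset (Fin d)) :
    (Fin d → ℝ) ≃ᵐ ((∀ _ : {j : Fin d // j ∈ u}, ℝ) × (∀ _ : {j : Fin d // ¬ j ∈ u}, ℝ)) :=
  MeasurableEquiv.piEquivPiSubtypeProd (fun _ : Fin d => ℝ) (fun j => j ∈ u)

lemma hyb_eq (u : Finset (Fin d)) (x z : Fin d → ℝ) :
    (fun j => if j ∈ u then x j else z j) = (eqv u).symm (((eqv u) x).1, ((eqv u) z).2) := by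
  funext j
  by_cases hj : j ∈ u <;>
    simp [eqv, MeasurableEquiv.piEquivPiSubtypeProd, Equiv.piEquivPiSubtypeProd, hj]

lemma hyb_symm_symm (u : Finset (Fin d)) (p p' : ∀ _ : {j : Fin d // j ∈ u}, ℝ)
    (q q' : ∀ _ : {j : Fin d // ¬ j ∈ u}, ℝ) :
    (fun j => if j ∈ u then (eqv u).symm (p, q) j else (eqv u).symm (p', q') j)
      = (eqv u).symm (p, q') := by
  funext j
  by_cases hj : j ∈ u <;>
    simp [eqv, MeasurableEquiv.piEquivPiSubtypeProd, Equiv.piEquivPiSubtypeProd, hj]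

lemma measurable_hyb_left (u : Finset (Fin d)) (x : Fin d → ℝ) :
    Measurable (fun z : Fin d → ℝ => fun j => if j ∈ u then x j else z j) := by
  apply measurable_pi_lambda
  intro j
  by_cases h : j ∈ u <;> simp only [h, if_true, if_false]
  · exact measurable_const
  · exact measurable_pi_apply j

lemma recomb (u : Finset (Fin d)) {g : (Fin d → ℝ) → ℝ} (hg : Measurable g) {B : ℝ}
    (hB : ∀ x, |g x| ≤ B) :
    ∫ x, ∫ z, g (fun j => if j ∈ u then x j else z j) ∂(Measure.pi μ) ∂(Measure.pi μ)
      = ∫ y, g y ∂(Measure.pi μ) := by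
  have h := recomb_abs (eqv u)
    (measurePreserving_piEquivPiSubtypeProd μ (fun j => j ∈ u)) hg hB
  simp only [← hyb_eq] at h
  exact h

lemma factor (u : Finset (Fin d)) {g1 g2 : (Fin d → ℝ) → ℝ}
    (hm1 : Measurable g1) (hm2 : Measurable g2)
    (h1 : ∀ (y w : Fin d → ℝ), g1 (fun j => if j ∈ u then y j else w j) = g1 y)
    (h2 : ∀ (y w : Fin d → ℝ), g2 (fun j => if j ∈ u then w j else y j) = g2 y) :
    ∫ y, g1 y * g2 y ∂(Measure.pi μ)
      = (∫ y, g1 y ∂(Measure.pi μ)) * ∫ y, g2 y ∂(Measure.pi μ) := by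
  apply factor_abs (eqv u) (measurePreserving_piEquivPiSubtypeProd μ (fun j => j ∈ u)) hm1 hm2
  · intro p q q'
    have key := h1 ((eqv u).symm (p, q)) ((eqv u).symm (p, q'))
    rw [hyb_symm_symm u p p q q'] at key
    exact key.symm
  · intro p p' q
    have key := h2 ((eqv u).symm (p', q)) ((eqv u).symm (p, q))
    rw [hyb_symm_symm u p p' q q] at key
    exact key

lemma marg (hf : Measurable f) (hC : ∀ x, |f x| ≤ C) {a s : Finset (Fin d)} (hs : s ⊆ a)
    (x : Fin d → ℝ) :
    ∫ z, partialDep μ f a (fun j => if j ∈ s then x j else z j) ∂(Measure.pi μ)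
      = partialDep μ f s x := by
  set g : (Fin d → ℝ) → ℝ := fun y => f (fun j => if j ∈ s then x j else y j) with hg
  have hgm : Measurable g := hf.comp (measurable_hyb_left s x)
  have key : ∀ z : Fin d → ℝ, partialDep μ f a (fun j => if j ∈ s then x j else z j)
      = ∫ w, g (fun j => if j ∈ a \ s then z j else w j) ∂(Measure.pi μ) := by
    intro z
    unfold partialDep
    rw [hg]
    congr 1
    funext w
    congr 1
    funext j
    by_cases hja : j ∈ a <;> by_cases hjs : j ∈ s <;>
      simp [hja, hjs, Finset.mem_sdiff]
    exact absurd (hs hjs) hja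
  simp only [key]
  rw [recomb (a \ s) hgm (B := C) (fun y => hC _)]
  rfl

lemma int_mul (hf : Measurable f) (hC : ∀ x, |f x| ≤ C) (a b : Finset (Fin d)) :
    ∫ x, partialDep μ f a x * partialDep μ f b x ∂(Measure.pi μ)
      = ∫ x, partialDep μ f (a ∩ b) x * partialDep μ f (a ∩ b) x ∂(Measure.pi μ) := by
  have hC0 : 0 ≤ C := le_trans (abs_nonneg _) (hC (fun _ => 0))
  set s := a ∩ b with hsdef
  have hFa : Measurable (partialDep μ f a) := measurable_partialDep hf a
  have hFb : Measurable (partialDep μ f b) := measurable_partialDep hf b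
  have hBa : ∀ x, |partialDep μ f a x| ≤ C := abs_partialDep_le hC a
  have hBb : ∀ x, |partialDep μ f b x| ≤ C := abs_partialDep_le hC b
  have step1 := (recomb (μ := μ) s (g := fun y => partialDep μ f a y * partialDep μ f b y)
    (hFa.mul hFb) (B := C * C)
    (fun y => by
      rw [abs_mul]
      exact mul_le_mul (hBa y) (hBb y) (abs_nonneg _) hC0)).symm
  rw [step1]
  congr 1
  funext x
  have h1 : ∀ y w : Fin d → ℝ,
      partialDep μ f a (fun j => if j ∈ s then x j else
          (fun j' => if j' ∈ a \ s then y j' else w j') j)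
        = partialDep μ f a (fun j => if j ∈ s then x j else y j) := by
    intro y w
    apply partialDep_congr
    intro j hja
    by_cases hjs : j ∈ s <;> simp [hjs, Finset.mem_sdiff, hja]
  have h2 : ∀ y w : Fin d → ℝ,
      partialDep μ f b (fun j => if j ∈ s then x j else
          (fun j' => if j' ∈ a \ s then w j' else y j') j)
        = partialDep μ f b (fun j => if j ∈ s then x j else y j) := by
    intro y w
    apply partialDep_congr
    intro j hjb
    by_cases hjs : j ∈ s <;> simp [hjs, Finset.mem_sdiff]
    intro hja
    exact absurd (Finset.mem_inter.2 ⟨hja, hjb⟩) (by rw [← hsdef]; exact hjs)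
  have hfac := factor (μ := μ) (a \ s)
    (hm1 := (hFa.comp (measurable_hyb_left s x)))
    (hm2 := (hFb.comp (measurable_hyb_left s x)))
    (g1 := fun z => partialDep μ f a (fun j => if j ∈ s then x j else z j))
    (g2 := fun z => partialDep μ f b (fun j => if j ∈ s then x j else z j))
    (fun y w => h1 y w) (fun y w => h2 y w)
  rw [hfac, marg hf hC (Finset.inter_subset_left) x,
    marg hf hC (Finset.inter_subset_right) x]

end concrete

section comb
variable {d : ℕ}

lemma sum_pow_neg_one (s : Finset (Fin d)) :
    ∑ t ∈ s.powerset, (-1 : ℝ) ^ t.card = if s = ∅ then 1 else 0 := by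
  have h := Finset.sum_powerset_neg_one_pow_card (x := s)
  have h2 := congrArg (fun n : ℤ => (n : ℝ)) h
  push_cast at h2
  rw [h2]

lemma count_between (u w : Finset (Fin d)) (hw : w ⊆ u) :
    ∑ v ∈ u.powerset.filter (fun v => w ⊆ v), (-1 : ℝ) ^ (v.card - w.card)
      = if u = w then 1 else 0 := by
  classical
  have hbij : ∑ v ∈ u.powerset.filter (fun v => w ⊆ v), (-1 : ℝ) ^ (v.card - w.card)
      = ∑ t ∈ (u \ w).powerset, (-1 : ℝ) ^ t.card := by
    refine Finset.sum_nbij' (fun v => v \ w) (fun t => w ∪ t) ?_ ?_ ?_ ?_ ?_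
    · intro v hv
      simp only [Finset.mem_filter, Finset.mem_powerset] at hv ⊢
      exact Finset.sdiff_subset_sdiff hv.1 (le_refl w)
    · intro t ht
      simp only [Finset.mem_powerset] at ht
      simp only [Finset.mem_filter, Finset.mem_powerset]
      exact ⟨Finset.union_subset hw (ht.trans (Finset.sdiff_subset)), Finset.subset_union_left⟩
    · intro v hv
      simp only [Finset.mem_filter, Finset.mem_powerset] at hv
      exact Finset.union_sdiff_of_subset hv.2
    · intro t ht
      simp only [Finset.mem_powerset] at ht
      have hdisj : Disjoint w t := by
        rw [Finset.disjoint_left]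
        intro j hjw hjt
        exact (Finset.mem_sdiff.1 (ht hjt)).2 hjw
      exact Finset.union_sdiff_cancel_left hdisj
    · intro v hv
      simp only [Finset.mem_filter, Finset.mem_powerset] at hv
      congr 1
      exact (Finset.card_sdiff_of_subset hv.2).symm
  rw [hbij, sum_pow_neg_one]
  congr 1
  simp only [Finset.sdiff_eq_empty_iff_subset, eq_iff_iff]
  constructor
  · intro h; exact Finset.Subset.antisymm h hw
  · intro h; rw [h]

end comb

section assemble
variable {d : ℕ} {μ : Fin d → Measure ℝ} [∀ i, IsProbabilityMeasure (μ i)]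
variable {f : (Fin d → ℝ) → ℝ} {C : ℝ}

lemma mobius (u : Finset (Fin d)) (x : Fin d → ℝ) :
    ∑ v ∈ u.powerset, pddComp μ f v x = partialDep μ f u x := by
  classical
  unfold pddComp
  rw [Finset.sum_comm' (s' := fun w => u.powerset.filter (fun v => w ⊆ v)) (t' := u.powerset)
    (fun v w => by
      simp only [Finset.mem_powerset, Finset.mem_filter]
      constructor
      · rintro ⟨h1, h2⟩; exact ⟨⟨h1, h2⟩, h2.trans h1⟩
      · rintro ⟨⟨h1, h2⟩, _⟩; exact ⟨h1, h2⟩)]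
  have step : ∀ w ∈ u.powerset,
      ∑ v ∈ u.powerset.filter (fun v => w ⊆ v), (-1 : ℝ) ^ (v.card - w.card) * partialDep μ f w x
        = (if u = w then 1 else 0) * partialDep μ f w x := by
    intro w hw
    rw [← Finset.sum_mul, count_between u w (Finset.mem_powerset.1 hw)]
  rw [Finset.sum_congr rfl step]
  simp only [ite_mul, one_mul, zero_mul]
  rw [Finset.sum_ite_eq]
  simp [Finset.mem_powerset.2 (Finset.Subset.refl u)]

lemma partialDep_univ (x : Fin d → ℝ) : partialDep μ f univ x = f x := by
  unfold partialDep
  simp only [Finset.mem_univ, if_true]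
  simp

lemma pddComp_empty (x : Fin d → ℝ) : pddComp μ f ∅ x = ∫ z, f z ∂(Measure.pi μ) := by
  unfold pddComp partialDep
  simp

lemma decomp (x : Fin d → ℝ) :
    f x - ∫ z, f z ∂(Measure.pi μ)
      = ∑ u ∈ (Finset.univ : Finset (Fin d)).powerset.erase ∅, pddComp μ f u x := by
  rw [Finset.sum_erase_eq_sub (Finset.mem_powerset.2 (Finset.empty_subset _))]
  rw [mobius, partialDep_univ, pddComp_empty]

lemma cancel (u : Finset (Fin d)) (j : Fin d) (hj : j ∈ u) (h : Finset (Fin d) → ℝ)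
    (hh : ∀ a ∈ (u.erase j).powerset, h (insert j a) = h a) :
    ∑ a ∈ u.powerset, (-1 : ℝ) ^ (u.card - a.card) * h a = 0 := by
  classical
  have hu : u = insert j (u.erase j) := (Finset.insert_erase hj).symm
  rw [hu, Finset.sum_powerset_insert (Finset.notMem_erase j u)]
  have hcard : (insert j (u.erase j)).card = (u.erase j).card + 1 :=
    Finset.card_insert_of_notMem (Finset.notMem_erase j u)
  have key : ∀ a ∈ (u.erase j).powerset,
      (-1 : ℝ) ^ ((insert j (u.erase j)).card - (insert j a).card) * h (insert j a)
        = - ((-1 : ℝ) ^ ((insert j (u.erase j)).card - a.card) * h a) := by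
    intro a ha
    have hja : j ∉ a := fun hja => Finset.notMem_erase j u (Finset.mem_powerset.1 ha hja)
    have hac : a.card ≤ (u.erase j).card := Finset.card_le_card (Finset.mem_powerset.1 ha)
    rw [hh a ha, Finset.card_insert_of_notMem hja, hcard]
    have h1 : (u.erase j).card + 1 - (a.card + 1) = (u.erase j).card - a.card := by omega
    have h2 : (u.erase j).card + 1 - a.card = ((u.erase j).card - a.card) + 1 := by omega
    rw [h1, h2, pow_succ]
    ring
  rw [Finset.sum_congr rfl key, Finset.sum_neg_distrib]
  simp

lemma orth (hf : Measurable f) (hC : ∀ x, |f x| ≤ C) (u v : Finset (Fin d)) (huv : u ≠ v) :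
    ∫ x, pddComp μ f u x * pddComp μ f v x ∂(Measure.pi μ) = 0 := by
  classical
  have hC0 : 0 ≤ C := le_trans (abs_nonneg _) (hC fun _ => 0)
  set G : Finset (Fin d) → ℝ :=
    fun s => ∫ x, partialDep μ f s x * partialDep μ f s x ∂(Measure.pi μ) with hG
  have key : ∀ a b : Finset (Fin d),
      ∫ x, partialDep μ f a x * partialDep μ f b x ∂(Measure.pi μ) = G (a ∩ b) :=
    fun a b => int_mul hf hC a b
  have hIab : ∀ a b : Finset (Fin d),
      Integrable (fun x => partialDep μ f a x * partialDep μ f b x) (Measure.pi μ) := by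
    intro a b
    apply integrable_of_bdd (B := C * C)
      (((measurable_partialDep hf a).mul (measurable_partialDep hf b)).aestronglyMeasurable)
    intro x
    rw [Pi.mul_apply, abs_mul]
    exact mul_le_mul (abs_partialDep_le hC a x) (abs_partialDep_le hC b x) (abs_nonneg _) hC0
  have expand : ∫ x, pddComp μ f u x * pddComp μ f v x ∂(Measure.pi μ)
      = ∑ a ∈ u.powerset, (-1 : ℝ) ^ (u.card - a.card) *
          (∑ b ∈ v.powerset, (-1 : ℝ) ^ (v.card - b.card) * G (a ∩ b)) := by
    have hpt : ∀ x, pddComp μ f u x * pddComp μ f v x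
        = ∑ a ∈ u.powerset, ∑ b ∈ v.powerset,
            ((-1 : ℝ) ^ (u.card - a.card) * (-1 : ℝ) ^ (v.card - b.card)) *
              (partialDep μ f a x * partialDep μ f b x) := by
      intro x
      unfold pddComp
      rw [Finset.sum_mul_sum]
      refine Finset.sum_congr rfl fun a _ => Finset.sum_congr rfl fun b _ => by ring
    simp only [hpt]
    rw [integral_finset_sum _ (fun a _ => integrable_finset_sum _
      (fun b _ => ((hIab a b).const_mul _)))]
    refine Finset.sum_congr rfl fun a _ => ?_
    rw [integral_finset_sum _ (fun b _ => ((hIab a b).const_mul _)), Finset.mul_sum]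
    refine Finset.sum_congr rfl fun b _ => ?_
    rw [integral_const_mul, key a b]
    ring
  rw [expand]
  rcases (by
    by_cases h1 : u ⊆ v
    · have h2 : ¬ v ⊆ u := fun h2 => huv (Finset.Subset.antisymm h1 h2)
      obtain ⟨j, hj1, hj2⟩ := Finset.not_subset.1 h2
      exact Or.inr ⟨j, hj1, hj2⟩
    · obtain ⟨j, hj1, hj2⟩ := Finset.not_subset.1 h1
      exact Or.inl ⟨j, hj1, hj2⟩ :
    (∃ j, j ∈ u ∧ j ∉ v) ∨ (∃ j, j ∈ v ∧ j ∉ u)) with ⟨j, hju, hjv⟩ | ⟨j, hjv, hju⟩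
  · apply cancel u j hju
    intro a _
    refine Finset.sum_congr rfl fun b hb => ?_
    have hjb : j ∉ b := fun hjb => hjv (Finset.mem_powerset.1 hb hjb)
    rw [Finset.insert_inter_of_notMem hjb]
  · have swap : ∑ a ∈ u.powerset, (-1 : ℝ) ^ (u.card - a.card) *
        (∑ b ∈ v.powerset, (-1 : ℝ) ^ (v.card - b.card) * G (a ∩ b))
        = ∑ b ∈ v.powerset, (-1 : ℝ) ^ (v.card - b.card) *
            (∑ a ∈ u.powerset, (-1 : ℝ) ^ (u.card - a.card) * G (a ∩ b)) := by
      simp only [Finset.mul_sum]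
      rw [Finset.sum_comm]
      refine Finset.sum_congr rfl fun b _ => Finset.sum_congr rfl fun a _ => by ring
    rw [swap]
    apply cancel v j hjv
    intro b _
    refine Finset.sum_congr rfl fun a ha => ?_
    have hja : j ∉ a := fun hja => hju (Finset.mem_powerset.1 ha hja)
    rw [Finset.inter_comm, Finset.insert_inter_of_notMem hja, Finset.inter_comm]

end assemble


/-- Variance decomposition: the variance of `f` is the sum of the variances of the
nonempty PDD components. -/
theorem pdd_variance_decomposition {d : ℕ} (hd : 1 ≤ d)
    (μ : Fin d → Measure ℝ) [∀ i, IsProbabilityMeasure (μ i)]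
    (f : (Fin d → ℝ) → ℝ) (hf : Measurable f) (C : ℝ) (hC : ∀ x, |f x| ≤ C) :
    ∫ x, (f x - ∫ z, f z ∂(Measure.pi μ)) ^ 2 ∂(Measure.pi μ) =
      ∑ u ∈ (Finset.univ : Finset (Fin d)).powerset.erase ∅,
        ∫ x, (pddComp μ f u x) ^ 2 ∂(Measure.pi μ) := by
  classical
  have hC0 : 0 ≤ C := le_trans (abs_nonneg _) (hC fun _ => 0)
  set P := (Finset.univ : Finset (Fin d)).powerset.erase ∅ with hP
  have hm : ∀ u : Finset (Fin d), Measurable (pddComp μ f u) := by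
    intro u
    unfold pddComp
    exact Finset.measurable_sum _ fun v _ => (measurable_partialDep hf v).const_mul _
  have hb : ∀ u : Finset (Fin d), ∀ x, |pddComp μ f u x| ≤ (u.powerset.card : ℝ) * C := by
    intro u x
    unfold pddComp
    calc |∑ v ∈ u.powerset, (-1 : ℝ) ^ (u.card - v.card) * partialDep μ f v x|
        ≤ ∑ v ∈ u.powerset, |(-1 : ℝ) ^ (u.card - v.card) * partialDep μ f v x| :=
          Finset.abs_sum_le_sum_abs _ _
      _ ≤ ∑ _v ∈ u.powerset, C := by
          refine Finset.sum_le_sum fun v _ => ?_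
          rw [abs_mul, abs_pow, abs_neg, abs_one, one_pow, one_mul]
          exact abs_partialDep_le hC v x
      _ = (u.powerset.card : ℝ) * C := by rw [Finset.sum_const, nsmul_eq_mul]
  have hI : ∀ u v : Finset (Fin d),
      Integrable (fun x => pddComp μ f u x * pddComp μ f v x) (Measure.pi μ) := by
    intro u v
    apply integrable_of_bdd (B := ((u.powerset.card : ℝ) * C) * ((v.powerset.card : ℝ) * C))
      (((hm u).mul (hm v)).aestronglyMeasurable)
    intro x
    rw [Pi.mul_apply, abs_mul]
    exact mul_le_mul (hb u x) (hb v x) (abs_nonneg _)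
      (mul_nonneg (Nat.cast_nonneg _) hC0)
  have hpt : ∀ x : Fin d → ℝ, (f x - ∫ z, f z ∂(Measure.pi μ)) ^ 2
      = ∑ u ∈ P, ∑ v ∈ P, pddComp μ f u x * pddComp μ f v x := by
    intro x
    rw [decomp x, sq, Finset.sum_mul_sum]
  simp only [hpt]
  rw [integral_finset_sum _ (fun u _ => integrable_finset_sum _ (fun v _ => hI u v))]
  refine Finset.sum_congr rfl fun u hu => ?_
  rw [integral_finset_sum _ (fun v _ => hI u v)]
  rw [Finset.sum_eq_single_of_mem u hu (fun v _ hne => orth hf hC u v hne.symm)]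
  congr 1
  funext x
  rw [sq]
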